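/- Under the hypotheses of the forward-invariance theorem for control barrier functions (control-affine dynamics ẋ = f(x) + g(x)u with locally Lipschitz f, g; B : ℝⁿ → ℝ continuously differentiable; α : ℝ → ℝ a locally Lipschitz extended class-K∞ function; π : ℝⁿ → ℝᵐ locally Lipschitz with ⟪∇B(x), f(x) + g(x)·π(x)⟫ + α(B(x)) ≥ 0 for all x), suppose additionally that a failure set F ⊆ ℝⁿ is disjoint from the superlevel set B_{≥0} = {x | B(x) ≥ 0}. Then every differentiable solution x : [0, ∞) → ℝⁿ of the closed-loop ODE x'(t) = f(x(t)) + g(x(t))·π(x(t)) with B(x(0)) ≥ 0 satisfies x(t) ∉ F for all t ≥ 0. -/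

import Mathlib

open scoped RealInnerProductSpace

attribute [local instance] Matrix.normedAddCommGroup

/-- Under the hypotheses of the forward-invariance theorem for control
barrier functions, if a failure set `F` is disjoint from the superlevel set
`{x | B x ≥ 0}`, then every closed-loop solution starting in the superlevel
set never reaches `F`. -/
theorem cbf_safety_no_failure
    (n m : ℕ)
    (f : EuclideanSpace ℝ (Fin n) → EuclideanSpace ℝ (Fin n))
    (g : EuclideanSpace ℝ (Fin n) → Matrix (Fin n) (Fin m) ℝ)
    (hf : LocallyLipschitz f) (hg : LocallyLipschitz g)
    (B : EuclideanSpace ℝ (Fin n) → ℝ) (hB : ContDiff ℝ 1 B)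
    (α : ℝ → ℝ) (hα_lip : LocallyLipschitz α) (hα_mono : StrictMono α)
    (hα0 : α 0 = 0)
    (π : EuclideanSpace ℝ (Fin n) → EuclideanSpace ℝ (Fin m))
    (hπ : LocallyLipschitz π)
    (hcbf : ∀ p : EuclideanSpace ℝ (Fin n),
      0 ≤ ⟪gradient B p, f p +
          (EuclideanSpace.equiv (Fin n) ℝ).symm
            ((g p).mulVec (EuclideanSpace.equiv (Fin m) ℝ (π p)))⟫ + α (B p))
    (x : ℝ → EuclideanSpace ℝ (Fin n))
    (hx : ∀ t, 0 ≤ t → HasDerivAt x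
      (f (x t) + (EuclideanSpace.equiv (Fin n) ℝ).symm
        ((g (x t)).mulVec (EuclideanSpace.equiv (Fin m) ℝ (π (x t))))) t)
    (hx0 : 0 ≤ B (x 0))
    (F : Set (EuclideanSpace ℝ (Fin n)))
    (hF : Disjoint F {p : EuclideanSpace ℝ (Fin n) | 0 ≤ B p}) :
    ∀ t, 0 ≤ t → x t ∉ F := by
  -- It suffices to show B (x t) ≥ 0 for all t ≥ 0.
  have key : ∀ t, 0 ≤ t → 0 ≤ B (x t) := by
    intro t ht
    by_contra hneg
    push_neg at hneg
    set φ : ℝ → ℝ := fun s => B (x s) with hφ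
    -- derivative of φ
    have hderiv : ∀ s, 0 ≤ s → HasDerivAt φ
        (⟪gradient B (x s), f (x s) + (EuclideanSpace.equiv (Fin n) ℝ).symm
          ((g (x s)).mulVec (EuclideanSpace.equiv (Fin m) ℝ (π (x s))))⟫) s := by
      intro s hs
      have hdiff : DifferentiableAt ℝ B (x s) := (hB.differentiable one_ne_zero).differentiableAt
      have hgrad := hdiff.hasGradientAt.hasFDerivAt
      have := hgrad.comp_hasDerivAt s (hx s hs)
      simp [Function.comp, InnerProductSpace.toDual_apply_apply] at this ⊢; exact this
    have ht0 : (0:ℝ) < t := by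
      rcases ht.lt_or_eq with h | h
      · exact h
      · rw [← h] at hneg; exact absurd hx0 (not_le.2 hneg)
    -- t0 = sup of times in [0,t] where φ ≥ 0
    set S : Set ℝ := {s | s ∈ Set.Icc (0:ℝ) t ∧ 0 ≤ φ s} with hS
    have hSne : S.Nonempty := ⟨0, ⟨le_refl 0, ht⟩, hx0⟩
    have hSbdd : BddAbove S := ⟨t, fun s hs => hs.1.2⟩
    set t0 : ℝ := sSup S with ht0def
    have hcont : ∀ s ∈ Set.Icc (0:ℝ) t, ContinuousAt φ s := fun s hs =>
      (hderiv s hs.1).continuousAt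
    have hφcont : ContinuousOn φ (Set.Icc 0 t) := fun s hs => (hcont s hs).continuousWithinAt
    have hSclosed : IsClosed S := by
      have : S = Set.Icc (0:ℝ) t ∩ φ ⁻¹' (Set.Ici 0) := rfl
      rw [this]
      exact (hφcont.preimage_isClosed_of_isClosed isClosed_Icc isClosed_Ici)
    have ht0S : t0 ∈ S := hSclosed.csSup_mem hSne hSbdd
    have ht0mem : t0 ∈ Set.Icc (0:ℝ) t := ht0S.1
    have ht0lt : t0 < t := lt_of_le_of_ne ht0mem.2 (by
      intro h
      exact absurd ht0S.2 (by rw [h]; exact not_le.2 hneg))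
    -- on (t0, t], φ < 0
    have hnegafter : ∀ s, t0 < s → s ≤ t → φ s < 0 := by
      intro s hs1 hs2
      by_contra h
      push_neg at h
      exact absurd (le_csSup hSbdd ⟨⟨le_trans ht0mem.1 hs1.le, hs2⟩, h⟩) (not_le.2 hs1)
    -- φ strictly monotone on [t0, t]
    have hmono : StrictMonoOn φ (Set.Icc t0 t) := by
      apply strictMonoOn_of_deriv_pos (convex_Icc t0 t)
      · exact hφcont.mono (Set.Icc_subset_Icc_left ht0mem.1)
      · intro s hs
        rw [interior_Icc] at hs
        have hs0 : (0:ℝ) ≤ s := le_trans ht0mem.1 hs.1.le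
        rw [(hderiv s hs0).deriv]
        have hφs : φ s < 0 := hnegafter s hs.1 hs.2.le
        have : α (φ s) < 0 := by rw [← hα0]; exact hα_mono hφs
        have := hcbf (x s)
        simp only [hφ] at *
        linarith
    have := hmono (Set.left_mem_Icc.2 ht0lt.le) (Set.right_mem_Icc.2 ht0lt.le) ht0lt
    have hφt : φ t < 0 := hneg
    have hφt0 : 0 ≤ φ t0 := ht0S.2
    linarith
  intro t ht hmem
  exact Set.disjoint_left.1 hF hmem (key t ht)
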